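/- For a globally hyperbolic poset X, the set IX of closed intervals [a,b] with a ≤ b, ordered by reverse inclusion, is a directed-complete partial order in which the supremum of a directed family of intervals is their intersection. -/

import Mathlib

open Set

/-- `a` is way below `x`. -/
def wayBelow {α : Type*} [Preorder α] (a x : α) : Prop :=
  ∀ S : Set α, S.Nonempty → DirectedOn (· ≤ ·) S → ∀ d, IsLUB S d → x ≤ d →
    ∃ s ∈ S, a ≤ s

/-- A poset is continuous if every element is the supremum of a directed set
of elements way below it. -/
def ContinuousPoset (α : Type*) [Preorder α] : Prop :=
  ∀ x : α, ∃ S : Set α, S ⊆ {a | wayBelow a x} ∧ S.Nonempty ∧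
    DirectedOn (· ≤ ·) S ∧ IsLUB S x

/-- A basis for a continuous poset. -/
def PosetBasis {α : Type*} [Preorder α] (B : Set α) : Prop :=
  ∀ x : α, ∃ S : Set α, S ⊆ B ∩ {a | wayBelow a x} ∧ S.Nonempty ∧
    DirectedOn (· ≤ ·) S ∧ IsLUB S x

/-- Scott open sets: upper sets inaccessible by directed suprema. -/
def ScottOpen {α : Type*} [Preorder α] (U : Set α) : Prop :=
  IsUpperSet U ∧ ∀ S : Set α, S.Nonempty → DirectedOn (· ≤ ·) S → ∀ d, IsLUB S d →
    d ∈ U → (S ∩ U).Nonempty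

/-- The Scott topology. -/
def scottTop (α : Type*) [Preorder α] : TopologicalSpace α :=
  TopologicalSpace.generateFrom {U | ScottOpen U}

/-- A bicontinuous poset. -/
def Bicontinuous (α : Type*) [Preorder α] : Prop :=
  ContinuousPoset α ∧
  (∀ x y : α, wayBelow x y ↔
    ∀ S : Set α, S.Nonempty → DirectedOn (· ≥ ·) S → ∀ i, IsGLB S i → i ≤ x →
      ∃ s ∈ S, s ≤ y) ∧
  (∀ x : α, DirectedOn (· ≥ ·) {y | wayBelow x y} ∧ IsGLB {y | wayBelow x y} x)

/-- The basic open intervals `(a,b) = {x | a ≪ x ≪ b}`. -/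
def intervalBasis (α : Type*) [Preorder α] : Set (Set α) :=
  {s | ∃ a b : α, s = {x | wayBelow a x ∧ wayBelow x b}}

/-- The interval topology, generated by the sets `(a,b)`. -/
def intervalTop (α : Type*) [Preorder α] : TopologicalSpace α :=
  TopologicalSpace.generateFrom (intervalBasis α)

/-- A globally hyperbolic poset: bicontinuous, with compact closed intervals. -/
def GloballyHyperbolic (α : Type*) [PartialOrder α] : Prop :=
  Bicontinuous α ∧ ∀ a b : α, @IsCompact α (intervalTop α) (Set.Icc a b)

/-- The poset of closed intervals `[a,b]`, `a ≤ b`, under reverse inclusion. -/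
def IX (α : Type*) [PartialOrder α] := {p : α × α // p.1 ≤ p.2}

instance IX.instPartialOrder {α : Type*} [PartialOrder α] : PartialOrder (IX α) where
  le x y := x.1.1 ≤ y.1.1 ∧ y.1.2 ≤ x.1.2
  le_refl x := ⟨le_refl _, le_refl _⟩
  le_trans x y z h1 h2 := ⟨h1.1.trans h2.1, h2.2.trans h1.2⟩
  le_antisymm x y h1 h2 :=
    Subtype.ext (Prod.ext_iff.mpr ⟨le_antisymm h1.1 h2.1, le_antisymm h2.2 h1.2⟩)

section Rel

variable {β : Type*}

/-- Directedness with respect to an arbitrary relation. -/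
def relDirectedOn (r : β → β → Prop) (S : Set β) : Prop :=
  ∀ x ∈ S, ∀ y ∈ S, ∃ z ∈ S, r x z ∧ r y z

/-- Least upper bound with respect to an arbitrary relation. -/
def relIsLUB (r : β → β → Prop) (S : Set β) (d : β) : Prop :=
  (∀ s ∈ S, r s d) ∧ ∀ u, (∀ s ∈ S, r s u) → r d u

/-- The way-below relation with respect to an arbitrary relation. -/
def relWayBelow (r : β → β → Prop) (a x : β) : Prop :=
  ∀ S : Set β, S.Nonempty → relDirectedOn r S → ∀ d, relIsLUB r S d → r x d →
    ∃ s ∈ S, r a s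

/-- An abstract basis: a transitive relation, interpolative from the `-` direction. -/
def AbstractBasis (r : β → β → Prop) : Prop :=
  Transitive r ∧ ∀ (F : Finset β) (x : β), (∀ y ∈ F, r y x) →
    ∃ z, (∀ y ∈ F, r y z) ∧ r z x

/-- Interpolation in the `+` direction. -/
def PlusInterpolative (r : β → β → Prop) : Prop :=
  ∀ (F : Finset β) (x : β), (∀ y ∈ F, r x y) → ∃ z, r x z ∧ (∀ y ∈ F, r z y)

/-- An ideal: a nonempty directed lower set. -/
def IsIdeal (r : β → β → Prop) (I : Set β) : Prop :=
  I.Nonempty ∧ (∀ x y, r x y → y ∈ I → x ∈ I) ∧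
    ∀ x ∈ I, ∀ y ∈ I, ∃ z ∈ I, r x z ∧ r y z

/-- The ideal completion: ideals ordered by inclusion. -/
def IdealCompletion (r : β → β → Prop) := {I : Set β // IsIdeal r I}

instance IdealCompletion.instPartialOrder {β : Type*} (r : β → β → Prop) :
    PartialOrder (IdealCompletion r) where
  le I J := I.1 ⊆ J.1
  le_refl I := subset_rfl
  le_trans I J K h1 h2 := Set.Subset.trans h1 h2
  le_antisymm I J h1 h2 := Subtype.ext (Set.Subset.antisymm h1 h2)

end Rel

/-- The order on maximal elements induced by interval endpoints. -/
def maxLe {α : Type*} (left right : α → α) (a b : α) : Prop :=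
  ∃ x, left x = a ∧ right x = b

/-- An interval poset. -/
structure IntervalPoset (α : Type*) [PartialOrder α] where
  left : α → α
  right : α → α
  left_max : ∀ x, IsMax (left x)
  right_max : ∀ x, IsMax (right x)
  glb : ∀ x, IsGLB {left x, right x} x
  glue : ∀ x y, right x = left y →
    ∃ z, IsGLB {x, y} z ∧ left z = left x ∧ right z = right y
  sub_left : ∀ x p, IsMax p → x ≤ p →
    ∃ z, IsGLB {left x, p} z ∧ left z = left x ∧ right z = p
  sub_right : ∀ x p, IsMax p → x ≤ p →
    ∃ z, IsGLB {p, right x} z ∧ left z = p ∧ right z = right x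

/-- An interval domain. -/
structure IntervalDomain (α : Type*) [PartialOrder α] extends IntervalPoset α where
  dcpo : ∀ S : Set α, S.Nonempty → DirectedOn (· ≤ ·) S → ∃ d, IsLUB S d
  cont : ContinuousPoset α
  ax1 : ∀ x p, IsMax p → wayBelow x p →
    (∀ z, IsGLB {left x, p} z → ∃ u, wayBelow z u) ∧
    (∀ z, IsGLB {p, right x} z → ∃ u, wayBelow z u)
  ax2b : ∀ x : α, (∃ u, wayBelow x u) ↔
    (∀ y, left y = left x → y ≤ x →
      relWayBelow (fun u v => u ≤ v ∧ right u = right y ∧ right v = right y) y (right y))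
  ax2c : ∀ x : α, (∃ u, wayBelow x u) ↔
    (∀ y, right y = right x → y ≤ x →
      relWayBelow (fun u v => u ≤ v ∧ left u = left y ∧ left v = left y) y (left y))
  ax3a : ∀ (p : α) (S : Set α), S.Nonempty → S ⊆ {z | left z = p} →
    DirectedOn (· ≤ ·) S → ∀ u, IsLUB S u →
      left u = p ∧ ∀ (q : α) (T : Set α), T.Nonempty → T ⊆ {z | left z = q} →
        DirectedOn (· ≤ ·) T → ∀ v, IsLUB T v → right '' T = right '' S →
          right u = right v
  ax3b : ∀ (q : α) (S : Set α), S.Nonempty → S ⊆ {z | right z = q} →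
    DirectedOn (· ≤ ·) S → ∀ u, IsLUB S u →
      right u = q ∧ ∀ (p : α) (T : Set α), T.Nonempty → T ⊆ {z | right z = p} →
        DirectedOn (· ≤ ·) T → ∀ v, IsLUB T v → left '' T = left '' S →
          left u = left v
  ax4 : ∀ x : α, @IsCompact α (scottTop α) ({y | x ≤ y} ∩ {y | IsMax y})


section Aux

variable {α : Type*} [PartialOrder α]

open TopologicalSpace

lemma wayBelow_le {a x : α} (h : wayBelow a x) : a ≤ x := by
  obtain ⟨s, hs, hle⟩ := h {x} ⟨x, rfl⟩
    (fun u hu v hv => ⟨x, rfl, by simp_all⟩) x isLUB_singleton le_rfl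
  simp only [Set.mem_singleton_iff] at hs
  exact hs ▸ hle

lemma exists_wayAbove (h : Bicontinuous α) (x : α) : ∃ d, wayBelow x d := by
  by_contra hc
  push_neg at hc
  have hemp : {y | wayBelow x y} = (∅ : Set α) := by
    ext y; simp [hc y]
  have hglb := (h.2.2 x).2
  rw [hemp] at hglb
  have htop : ∀ z : α, z ≤ x := fun z => hglb.2 (by simp [lowerBounds])
  have : wayBelow x x := by
    refine (h.2.1 x x).2 ?_
    intro T hT _ i _ _
    exact ⟨hT.choose, hT.choose_spec, htop _⟩
  exact hc x this

lemma exists_wayBelow (h : Bicontinuous α) (x : α) : ∃ c, wayBelow c x := by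
  obtain ⟨T, hsub, hTne, _, _⟩ := h.1 x
  exact ⟨hTne.choose, hsub hTne.choose_spec⟩

lemma up_closed (h : Bicontinuous α) (a : α) :
    @IsClosed α (intervalTop α) {z | a ≤ z} := by
  letI := intervalTop α
  rw [← isOpen_compl_iff]
  rw [isOpen_iff_forall_mem_open]
  intro x hx
  simp only [Set.mem_compl_iff, Set.mem_setOf_eq] at hx
  -- find d with x ≪ d and ¬ a ≤ d
  have hglb := (h.2.2 x).2
  have hd : ∃ d, wayBelow x d ∧ ¬ a ≤ d := by
    by_contra hcon
    push_neg at hcon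
    exact hx (hglb.2 fun y hy => hcon y hy)
  obtain ⟨d, hxd, had⟩ := hd
  obtain ⟨c, hcx⟩ := exists_wayBelow h x
  refine ⟨{z | wayBelow c z ∧ wayBelow z d}, ?_, ?_, hcx, hxd⟩
  · intro z hz
    simp only [Set.mem_compl_iff, Set.mem_setOf_eq]
    intro haz
    exact had (haz.trans (wayBelow_le hz.2))
  · exact isOpen_generateFrom_of_mem ⟨c, d, rfl⟩

lemma down_closed (h : Bicontinuous α) (b : α) :
    @IsClosed α (intervalTop α) {z | z ≤ b} := by
  letI := intervalTop α
  rw [← isOpen_compl_iff]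
  rw [isOpen_iff_forall_mem_open]
  intro x hx
  simp only [Set.mem_compl_iff, Set.mem_setOf_eq] at hx
  obtain ⟨T, hsub, hTne, _, hTlub⟩ := h.1 x
  have hc : ∃ c, wayBelow c x ∧ ¬ c ≤ b := by
    by_contra hcon
    push_neg at hcon
    exact hx (hTlub.2 fun y hy => hcon y (hsub hy))
  obtain ⟨c, hcx, hcb⟩ := hc
  obtain ⟨d, hxd⟩ := exists_wayAbove h x
  refine ⟨{z | wayBelow c z ∧ wayBelow z d}, ?_, ?_, hcx, hxd⟩
  · intro z hz
    simp only [Set.mem_compl_iff, Set.mem_setOf_eq]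
    intro hzb
    exact hcb ((wayBelow_le hz.1).trans hzb)
  · exact isOpen_generateFrom_of_mem ⟨c, d, rfl⟩

lemma finset_ub {L : Set α} (hne : L.Nonempty) (hdir : DirectedOn (· ≤ ·) L)
    (F : Finset α) (hF : ↑F ⊆ L) : ∃ z ∈ L, ∀ y ∈ F, y ≤ z := by
  classical
  induction F using Finset.induction with
  | empty => exact ⟨hne.choose, hne.choose_spec, by simp⟩
  | insert a F' hni ih =>
    have hF' : ↑F' ⊆ L := fun y hy => hF (by simp [hy])
    obtain ⟨z, hz, hzub⟩ := ih hF'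
    have ha : a ∈ L := hF (by simp)
    obtain ⟨w, hw, haw, hzw⟩ := hdir a ha z hz
    exact ⟨w, hw, fun y hy => by
      rcases Finset.mem_insert.1 hy with rfl | hy
      · exact haw
      · exact (hzub y hy).trans hzw⟩

lemma finset_lb {L : Set α} (hne : L.Nonempty) (hdir : DirectedOn (· ≥ ·) L)
    (F : Finset α) (hF : ↑F ⊆ L) : ∃ z ∈ L, ∀ y ∈ F, z ≤ y := by
  classical
  induction F using Finset.induction with
  | empty => exact ⟨hne.choose, hne.choose_spec, by simp⟩
  | insert a F' hni ih =>
    have hF' : ↑F' ⊆ L := fun y hy => hF (by simp [hy])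
    obtain ⟨z, hz, hzlb⟩ := ih hF'
    have ha : a ∈ L := hF (by simp)
    obtain ⟨w, hw, haw, hzw⟩ := hdir a ha z hz
    exact ⟨w, hw, fun y hy => by
      rcases Finset.mem_insert.1 hy with rfl | hy
      · exact haw
      · exact hzw.trans (hzlb y hy)⟩

lemma directed_has_lub (h : GloballyHyperbolic α)
    {L : Set α} {a0 b0 : α} (hne : L.Nonempty) (hdir : DirectedOn (· ≤ ·) L)
    (hsub : L ⊆ Set.Icc a0 b0) : ∃ p, IsLUB L p := by
  classical
  letI := intervalTop α
  set t : ↥L ⊕ ↥(upperBounds L) → Set α :=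
    Sum.elim (fun a => {z | a.1 ≤ z}) (fun u => {z | z ≤ u.1}) with ht
  have htc : ∀ i, IsClosed (t i) := by
    rintro (a | u)
    · exact up_closed h.1 a.1
    · exact down_closed h.1 u.1
  have hfip : ∀ u : Finset (↥L ⊕ ↥(upperBounds L)),
      (Set.Icc a0 b0 ∩ ⋂ i ∈ u, t i).Nonempty := by
    intro u
    set f : ↥L ⊕ ↥(upperBounds L) → α :=
      Sum.elim (fun a => a.1) (fun _ => hne.choose) with hf
    have hFsub : ↑(u.image f) ⊆ L := by
      intro y hy
      simp only [Finset.coe_image, Set.mem_image, Finset.mem_coe] at hy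
      obtain ⟨i, _, rfl⟩ := hy
      rcases i with a | v
      · exact a.2
      · exact hne.choose_spec
    obtain ⟨z, hz, hzub⟩ := finset_ub hne hdir (u.image f) hFsub
    refine ⟨z, hsub hz, ?_⟩
    simp only [Set.mem_iInter]
    rintro (a | v) hi
    · exact hzub a.1 (Finset.mem_image_of_mem f hi)
    · exact v.2 hz
  obtain ⟨x, _, hx⟩ := (h.2 a0 b0).inter_iInter_nonempty t htc hfip
  simp only [Set.mem_iInter] at hx
  refine ⟨x, ?_, ?_⟩
  · intro a ha; exact hx (Sum.inl ⟨a, ha⟩)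
  · intro v hv; exact hx (Sum.inr ⟨v, hv⟩)

lemma codirected_has_glb (h : GloballyHyperbolic α)
    {L : Set α} {a0 b0 : α} (hne : L.Nonempty) (hdir : DirectedOn (· ≥ ·) L)
    (hsub : L ⊆ Set.Icc a0 b0) : ∃ p, IsGLB L p := by
  classical
  letI := intervalTop α
  set t : ↥L ⊕ ↥(lowerBounds L) → Set α :=
    Sum.elim (fun a => {z | z ≤ a.1}) (fun u => {z | u.1 ≤ z}) with ht
  have htc : ∀ i, IsClosed (t i) := by
    rintro (a | u)
    · exact down_closed h.1 a.1
    · exact up_closed h.1 u.1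
  have hfip : ∀ u : Finset (↥L ⊕ ↥(lowerBounds L)),
      (Set.Icc a0 b0 ∩ ⋂ i ∈ u, t i).Nonempty := by
    intro u
    set f : ↥L ⊕ ↥(lowerBounds L) → α :=
      Sum.elim (fun a => a.1) (fun _ => hne.choose) with hf
    have hFsub : ↑(u.image f) ⊆ L := by
      intro y hy
      simp only [Finset.coe_image, Set.mem_image, Finset.mem_coe] at hy
      obtain ⟨i, _, rfl⟩ := hy
      rcases i with a | v
      · exact a.2
      · exact hne.choose_spec
    obtain ⟨z, hz, hzlb⟩ := finset_lb hne hdir (u.image f) hFsub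
    refine ⟨z, hsub hz, ?_⟩
    simp only [Set.mem_iInter]
    rintro (a | v) hi
    · exact hzlb a.1 (Finset.mem_image_of_mem f hi)
    · exact v.2 hz
  obtain ⟨x, _, hx⟩ := (h.2 a0 b0).inter_iInter_nonempty t htc hfip
  simp only [Set.mem_iInter] at hx
  refine ⟨x, ?_, ?_⟩
  · intro a ha; exact hx (Sum.inl ⟨a, ha⟩)
  · intro v hv; exact hx (Sum.inr ⟨v, hv⟩)

end Aux

/-- for a globally hyperbolic poset, `IX` is a dcpo in which the
supremum of a directed family of intervals is their intersection. -/
theorem IX_dcpo {α : Type*} [PartialOrder α] (h : GloballyHyperbolic α)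
    (S : Set (IX α)) (hne : S.Nonempty) (hdir : DirectedOn (· ≤ ·) S) :
    ∃ m : IX α, IsLUB S m ∧
      Set.Icc m.1.1 m.1.2 = ⋂ s ∈ S, Set.Icc s.1.1 s.1.2 := by
  classical
  obtain ⟨s0, hs0⟩ := hne
  set T : Set (IX α) := {t ∈ S | s0 ≤ t} with hT
  have hTne : T.Nonempty := ⟨s0, hs0, le_refl _⟩
  set L : Set α := (fun s : IX α => s.1.1) '' T with hL
  set R : Set α := (fun s : IX α => s.1.2) '' T with hR
  have hLne : L.Nonempty := hTne.image _
  have hRne : R.Nonempty := hTne.image _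
  have hLsub : L ⊆ Set.Icc s0.1.1 s0.1.2 := by
    rintro _ ⟨t, ⟨htS, hst⟩, rfl⟩
    exact ⟨hst.1, t.2.trans hst.2⟩
  have hRsub : R ⊆ Set.Icc s0.1.1 s0.1.2 := by
    rintro _ ⟨t, ⟨htS, hst⟩, rfl⟩
    exact ⟨hst.1.trans t.2, hst.2⟩
  have hLdir : DirectedOn (· ≤ ·) L := by
    rintro _ ⟨t, ⟨htS, hst⟩, rfl⟩ _ ⟨t', ⟨ht'S, hst'⟩, rfl⟩
    obtain ⟨u, huS, htu, ht'u⟩ := hdir t htS t' ht'S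
    exact ⟨u.1.1, ⟨u, ⟨huS, hst.trans htu⟩, rfl⟩, htu.1, ht'u.1⟩
  have hRdir : DirectedOn (· ≥ ·) R := by
    rintro _ ⟨t, ⟨htS, hst⟩, rfl⟩ _ ⟨t', ⟨ht'S, hst'⟩, rfl⟩
    obtain ⟨u, huS, htu, ht'u⟩ := hdir t htS t' ht'S
    exact ⟨u.1.2, ⟨u, ⟨huS, hst.trans htu⟩, rfl⟩, htu.2, ht'u.2⟩
  obtain ⟨p, hp⟩ := directed_has_lub h hLne hLdir hLsub
  obtain ⟨q, hq⟩ := codirected_has_glb h hRne hRdir hRsub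
  -- every left endpoint of S is ≤ p, every right endpoint ≥ q
  have hleft : ∀ s ∈ S, s.1.1 ≤ p := by
    intro s hsS
    obtain ⟨u, huS, hsu, hs0u⟩ := hdir s hsS s0 hs0
    exact hsu.1.trans (hp.1 ⟨u, ⟨huS, hs0u⟩, rfl⟩)
  have hright : ∀ s ∈ S, q ≤ s.1.2 := by
    intro s hsS
    obtain ⟨u, huS, hsu, hs0u⟩ := hdir s hsS s0 hs0
    exact (hq.1 ⟨u, ⟨huS, hs0u⟩, rfl⟩).trans hsu.2
  -- p ≤ q
  have hpq : p ≤ q := by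
    refine hq.2 ?_
    rintro _ ⟨t, ⟨htS, hst⟩, rfl⟩
    refine hp.2 ?_
    rintro _ ⟨t', ⟨ht'S, hst'⟩, rfl⟩
    obtain ⟨u, huS, htu, ht'u⟩ := hdir t htS t' ht'S
    exact ht'u.1.trans (u.2.trans htu.2)
  refine ⟨⟨(p, q), hpq⟩, ⟨?_, ?_⟩, ?_⟩
  · intro s hsS
    exact ⟨hleft s hsS, hright s hsS⟩
  · intro u hu
    constructor
    · refine hp.2 ?_
      rintro _ ⟨t, ⟨htS, _⟩, rfl⟩
      exact (hu htS).1
    · refine hq.2 ?_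
      rintro _ ⟨t, ⟨htS, _⟩, rfl⟩
      exact (hu htS).2
  · ext x
    simp only [Set.mem_Icc, Set.mem_iInter]
    constructor
    · rintro ⟨hpx, hxq⟩ s hsS
      exact ⟨(hleft s hsS).trans hpx, hxq.trans (hright s hsS)⟩
    · intro hx
      constructor
      · refine hp.2 ?_
        rintro _ ⟨t, ⟨htS, _⟩, rfl⟩
        exact (hx t htS).1
      · refine hq.2 ?_
        rintro _ ⟨t, ⟨htS, _⟩, rfl⟩
        exact (hx t htS).2
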